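/- Let K be a field of characteristic zero and let C be a K-linear preadditive category. Let o ≥ 1 be an integer and let A, A', A'' be objects of C equipped with automorphisms g : A → A, g' : A' → A', g'' : A'' → A'' satisfying g^o = id_A, (g')^o = id_{A'}, (g'')^o = id_{A''}. Suppose i' : A' → A and p'' : A → A'' are morphisms satisfying the equivariance conditions g ∘ i' = i' ∘ g' and g'' ∘ p'' = p'' ∘ g, and suppose there exist morphisms p' : A → A' and i'' : A'' → A in C (not assumed equivariant) such that p' ∘ i' = id_{A'}, p' ∘ i'' = 0, p'' ∘ i' = 0, p'' ∘ i'' = id_{A''}, and i' ∘ p' + i'' ∘ p'' = id_A. Then there exist morphisms p̃' : A → A' and ĩ'' : A'' → A satisfying the equivariance conditions g' ∘ p̃' = p̃' ∘ g and g ∘ ĩ'' = ĩ'' ∘ g'', and such that p̃' ∘ i' = id_{A'}, p̃' ∘ ĩ'' = 0, p'' ∘ i' = 0, p'' ∘ ĩ'' = id_{A''}, and i' ∘ p̃' + ĩ'' ∘ p'' = id_A. -/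
import Mathlib


open CategoryTheory

/-- Iterated composition power of an endomorphism in a category. -/
def compPow {C : Type*} [CategoryTheory.Category C] {A : C} (g : A ⟶ A) : ℕ → (A ⟶ A)
  | 0 => 𝟙 A
  | n + 1 => compPow g n ≫ g

section Aux

variable {C : Type*} [Category C]

lemma compPow_zero {A : C} (g : A ⟶ A) : compPow g 0 = 𝟙 A := rfl

lemma compPow_succ {A : C} (g : A ⟶ A) (n : ℕ) : compPow g (n + 1) = compPow g n ≫ g := rfl

lemma compPow_add {A : C} (g : A ⟶ A) (m n : ℕ) :
    compPow g (m + n) = compPow g m ≫ compPow g n := by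
  induction n with
  | zero => simp [compPow]
  | succ n ih =>
      rw [← Nat.add_assoc, compPow_succ, compPow_succ, ih, Category.assoc]

lemma comm_compPow {X Y : C} (gX : X ⟶ X) (gY : Y ⟶ Y) (f : X ⟶ Y)
    (h : f ≫ gY = gX ≫ f) (n : ℕ) :
    f ≫ compPow gY n = compPow gX n ≫ f := by
  induction n with
  | zero => simp [compPow]
  | succ n ih =>
      rw [compPow_succ, compPow_succ, ← Category.assoc, ih, Category.assoc, h,
        ← Category.assoc]

lemma self_comm_compPow {X : C} (g : X ⟶ X) (n : ℕ) :
    g ≫ compPow g n = compPow g n ≫ g :=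
  comm_compPow g g g rfl n

lemma avg_shift [Preadditive C] {X Y : C} (gX : X ⟶ X) (gY : Y ⟶ Y) (f : X ⟶ Y) (o : ℕ)
    (hX : compPow gX o = 𝟙 X) (hY : compPow gY o = 𝟙 Y) :
    gX ≫ (∑ k ∈ Finset.range o, compPow gX k ≫ f ≫ compPow gY (o - k)) =
      (∑ k ∈ Finset.range o, compPow gX k ≫ f ≫ compPow gY (o - k)) ≫ gY := by
  set F : ℕ → (X ⟶ Y) := fun j => compPow gX j ≫ f ≫ compPow gY (o + 1 - j) with hF
  have hL : gX ≫ (∑ k ∈ Finset.range o, compPow gX k ≫ f ≫ compPow gY (o - k)) =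
      ∑ k ∈ Finset.range o, F (k + 1) := by
    rw [Preadditive.comp_sum]
    refine Finset.sum_congr rfl fun k hk => ?_
    have h1 : gX ≫ compPow gX k = compPow gX (k + 1) := by
      rw [compPow_succ, self_comm_compPow]
    have h2 : o + 1 - (k + 1) = o - k := by omega
    rw [hF]
    simp only [h2, ← h1, Category.assoc]
  have hR : (∑ k ∈ Finset.range o, compPow gX k ≫ f ≫ compPow gY (o - k)) ≫ gY =
      ∑ k ∈ Finset.range o, F k := by
    rw [Preadditive.sum_comp]
    refine Finset.sum_congr rfl fun k hk => ?_
    have hk' : k < o := Finset.mem_range.mp hk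
    have h2 : o + 1 - k = (o - k) + 1 := by omega
    rw [hF]
    simp only [h2, compPow_succ, Category.assoc]
  have h0 : F 0 = F o := by
    have e0 : o + 1 - 0 = o + 1 := by omega
    have eo : o + 1 - o = 1 := by omega
    rw [hF]
    dsimp only
    rw [e0, eo, hX, Category.id_comp, compPow_zero, Category.id_comp,
      compPow_succ, hY, Category.id_comp, compPow_succ, compPow_zero, Category.id_comp]
  have hs1 := Finset.sum_range_succ' F o
  have hs2 := Finset.sum_range_succ F o
  rw [hL, hR]
  have : (∑ k ∈ Finset.range o, F (k + 1)) + F 0 = (∑ k ∈ Finset.range o, F k) + F o := by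
    rw [← hs1, ← hs2]
  rw [h0] at this
  exact add_right_cancel this

end Aux

/-- Equivariant splitting criterion: in a `K`-linear preadditive category
(`K` a field of characteristic zero), given periodic automorphisms `g, g', g''`
of order dividing `o ≥ 1` on `A, A', A''`, equivariant morphisms
`i' : A' ⟶ A`, `p'' : A ⟶ A''`, and (not necessarily equivariant) morphisms
`p', i''` realizing the five biproduct identities, there exist *equivariant*
`ptilde, itilde` realizing the same identities. -/
theorem equivariant_splitting_criterion
    (K : Type*) [Field K] [CharZero K]
    (C : Type*) [Category C] [Preadditive C] [Linear K C]
    (o : ℕ) (ho : 1 ≤ o)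
    (A A' A'' : C)
    (g : A ⟶ A) (g' : A' ⟶ A') (g'' : A'' ⟶ A'')
    (hg : compPow g o = 𝟙 A) (hg' : compPow g' o = 𝟙 A') (hg'' : compPow g'' o = 𝟙 A'')
    (i' : A' ⟶ A) (p'' : A ⟶ A'')
    (hi'eq : i' ≫ g = g' ≫ i') (hp''eq : p'' ≫ g'' = g ≫ p'')
    (p' : A ⟶ A') (i'' : A'' ⟶ A)
    (h1 : i' ≫ p' = 𝟙 A') (h2 : i'' ≫ p' = 0)
    (h3 : i' ≫ p'' = 0) (h4 : i'' ≫ p'' = 𝟙 A'')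
    (h5 : p' ≫ i' + p'' ≫ i'' = 𝟙 A) :
    ∃ (ptilde : A ⟶ A') (itilde : A'' ⟶ A),
      ptilde ≫ g' = g ≫ ptilde ∧ itilde ≫ g = g'' ≫ itilde ∧
      i' ≫ ptilde = 𝟙 A' ∧ itilde ≫ ptilde = 0 ∧
      i' ≫ p'' = 0 ∧ itilde ≫ p'' = 𝟙 A'' ∧
      ptilde ≫ i' + p'' ≫ itilde = 𝟙 A := by
  have hoK : (o : K) ≠ 0 := Nat.cast_ne_zero.mpr (by omega)
  set c : K := (o : K)⁻¹ with hc
  set S1 : A ⟶ A' := ∑ k ∈ Finset.range o, compPow g k ≫ p' ≫ compPow g' (o - k) with hS1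
  set S2 : A'' ⟶ A := ∑ k ∈ Finset.range o, compPow g'' k ≫ i'' ≫ compPow g (o - k) with hS2
  set ptilde : A ⟶ A' := c • S1 with hpt
  set t : A'' ⟶ A := c • S2 with ht
  -- commutation lemmas
  have hi'pow : ∀ n, i' ≫ compPow g n = compPow g' n ≫ i' :=
    comm_compPow g' g i' hi'eq
  have hp''pow : ∀ n, p'' ≫ compPow g'' n = compPow g n ≫ p'' :=
    comm_compPow g g'' p'' hp''eq
  -- i' ≫ S1 = o • 𝟙
  have eq1 : i' ≫ S1 = (o : ℕ) • 𝟙 A' := by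
    rw [hS1, Preadditive.comp_sum]
    have : ∀ k ∈ Finset.range o,
        i' ≫ compPow g k ≫ p' ≫ compPow g' (o - k) = 𝟙 A' := by
      intro k hk
      have hk' : k < o := Finset.mem_range.mp hk
      rw [← Category.assoc, hi'pow k, Category.assoc, ← Category.assoc i' p', h1,
        Category.id_comp, ← compPow_add]
      have : k + (o - k) = o := by omega
      rw [this, hg']
    rw [Finset.sum_congr rfl this, Finset.sum_const, Finset.card_range]
  -- S2 ≫ p'' = o • 𝟙
  have eq2 : S2 ≫ p'' = (o : ℕ) • 𝟙 A'' := by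
    rw [hS2, Preadditive.sum_comp]
    have : ∀ k ∈ Finset.range o,
        (compPow g'' k ≫ i'' ≫ compPow g (o - k)) ≫ p'' = 𝟙 A'' := by
      intro k hk
      have hk' : k < o := Finset.mem_range.mp hk
      rw [Category.assoc, Category.assoc, ← hp''pow (o - k), ← Category.assoc i'', h4,
        Category.id_comp, ← compPow_add]
      have : k + (o - k) = o := by omega
      rw [this, hg'']
    rw [Finset.sum_congr rfl this, Finset.sum_const, Finset.card_range]
  -- S1 ≫ i'
  have eq3 : S1 ≫ i' = ∑ k ∈ Finset.range o, compPow g k ≫ (p' ≫ i') ≫ compPow g (o - k) := by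
    rw [hS1, Preadditive.sum_comp]
    refine Finset.sum_congr rfl fun k hk => ?_
    rw [Category.assoc, Category.assoc, ← hi'pow (o - k)]
    simp only [Category.assoc]
  -- p'' ≫ S2
  have eq4 : p'' ≫ S2 = ∑ k ∈ Finset.range o, compPow g k ≫ (p'' ≫ i'') ≫ compPow g (o - k) := by
    rw [hS2, Preadditive.comp_sum]
    refine Finset.sum_congr rfl fun k hk => ?_
    rw [← Category.assoc, hp''pow k]
    simp only [Category.assoc]
  -- the averaged version of h5
  have sum5 : S1 ≫ i' + p'' ≫ S2 = (o : ℕ) • 𝟙 A := by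
    rw [eq3, eq4, ← Finset.sum_add_distrib]
    have : ∀ k ∈ Finset.range o,
        compPow g k ≫ (p' ≫ i') ≫ compPow g (o - k) +
          compPow g k ≫ (p'' ≫ i'') ≫ compPow g (o - k) = 𝟙 A := by
      intro k hk
      have hk' : k < o := Finset.mem_range.mp hk
      rw [← Preadditive.comp_add, ← Preadditive.add_comp, h5, Category.id_comp,
        ← compPow_add]
      have : k + (o - k) = o := by omega
      rw [this, hg]
    rw [Finset.sum_congr rfl this, Finset.sum_const, Finset.card_range]
  -- scalar cancellation helper
  have hcancel : ∀ {X : C} (x : X ⟶ X), c • ((o : ℕ) • x) = x := by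
    intro X x
    rw [← Nat.cast_smul_eq_nsmul K o x, smul_smul, hc, inv_mul_cancel₀ hoK, one_smul]
  -- equivariance of ptilde and t
  have hpt_eq : ptilde ≫ g' = g ≫ ptilde := by
    rw [hpt, Linear.smul_comp, Linear.comp_smul, hS1,
      ← avg_shift g g' p' o hg hg']
  have ht_eq : t ≫ g = g'' ≫ t := by
    rw [ht, Linear.smul_comp, Linear.comp_smul, hS2,
      ← avg_shift g'' g i'' o hg'' hg]
  -- section / retraction identities
  have hio : i' ≫ ptilde = 𝟙 A' := by
    rw [hpt, Linear.comp_smul, eq1, hcancel]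
  have htp : t ≫ p'' = 𝟙 A'' := by
    rw [ht, Linear.smul_comp, eq2, hcancel]
  -- the equivariant idempotent
  set π : A ⟶ A := ptilde ≫ i' with hπ
  have hπp'' : π ≫ p'' = 0 := by
    rw [hπ, Category.assoc, h3, Limits.comp_zero]
  have hπpt : π ≫ ptilde = ptilde := by
    rw [hπ, Category.assoc, hio, Category.comp_id]
  have hπg : π ≫ g = g ≫ π := by
    rw [hπ, Category.assoc, hi'eq, ← Category.assoc, hpt_eq, Category.assoc]
  have key : π + p'' ≫ t = 𝟙 A := by
    rw [hπ, hpt, ht, Linear.smul_comp, Linear.comp_smul, ← smul_add, sum5, hcancel]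
  have hπidem : π ≫ π = π := by
    rw [hπ, ← Category.assoc, Category.assoc ptilde i' ptilde, hio, Category.comp_id]
  set itilde : A'' ⟶ A := t - t ≫ π with hit
  refine ⟨ptilde, itilde, hpt_eq, ?_, hio, ?_, h3, ?_, ?_⟩
  · -- itilde ≫ g = g'' ≫ itilde
    rw [hit, Preadditive.sub_comp, Preadditive.comp_sub, ht_eq]
    congr 1
    rw [Category.assoc, hπg, ← Category.assoc, ht_eq, Category.assoc]
  · -- itilde ≫ ptilde = 0
    rw [hit, Preadditive.sub_comp, Category.assoc, hπpt, sub_self]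
  · -- itilde ≫ p'' = 𝟙
    rw [hit, Preadditive.sub_comp, Category.assoc, hπp'', Limits.comp_zero, sub_zero, htp]
  · -- ptilde ≫ i' + p'' ≫ itilde = 𝟙
    have hw : p'' ≫ t = 𝟙 A - π := by rw [← key]; abel
    rw [hit, Preadditive.comp_sub, ← Category.assoc, hw, ← hπ]
    rw [Preadditive.sub_comp, Category.id_comp, hπidem, sub_self, sub_zero]
    abel
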